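/- Let θ > 1, r > 0, and let u : (-r, r) → ℝ be C² with -u'' + 2θ u^{2θ-1} ≤ 0 on (-r, r). Then for all x ∈ (-r, r), u(x) ≤ (√2(θ-1))^{-1/(θ-1)} [ (x + r)^{-1/(θ-1)} + (r - x)^{-1/(θ-1)} ]. -/

import Mathlib

open Set Filter

noncomputable def KOc (θ : ℝ) : ℝ := (Real.sqrt 2 * (θ - 1)) ^ (-(1 / (θ - 1)))
noncomputable def KOa (θ : ℝ) : ℝ := 1 / (θ - 1)

noncomputable def Vf (θ ρ x : ℝ) : ℝ :=
  KOc θ * (x + ρ) ^ (-KOa θ) + KOc θ * (ρ - x) ^ (-KOa θ)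
noncomputable def V1f (θ ρ x : ℝ) : ℝ :=
  KOc θ * (-KOa θ) * (x + ρ) ^ (-KOa θ - 1) + KOc θ * KOa θ * (ρ - x) ^ (-KOa θ - 1)
noncomputable def V2f (θ ρ x : ℝ) : ℝ :=
  KOc θ * (KOa θ * (KOa θ + 1)) * (x + ρ) ^ (-KOa θ - 2)
    + KOc θ * (KOa θ * (KOa θ + 1)) * (ρ - x) ^ (-KOa θ - 2)

lemma hd_plus (c p ρ : ℝ) {x : ℝ} (h : 0 < x + ρ) :
    HasDerivAt (fun y => c * (y + ρ) ^ p) (c * p * (x + ρ) ^ (p - 1)) x := by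
  have h1 : HasDerivAt (fun y : ℝ => y + ρ) 1 x := (hasDerivAt_id x).add_const ρ
  have h2 := (h1.rpow_const (p := p) (Or.inl (ne_of_gt h))).const_mul c
  exact h2.congr_deriv (by ring)

lemma hd_minus (c p ρ : ℝ) {x : ℝ} (h : 0 < ρ - x) :
    HasDerivAt (fun y => c * (ρ - y) ^ p) (-(c * p) * (ρ - x) ^ (p - 1)) x := by
  have h1 : HasDerivAt (fun y : ℝ => ρ - y) (-1) x := (hasDerivAt_id x).const_sub ρ
  have h2 := (h1.rpow_const (p := p) (Or.inl (ne_of_gt h))).const_mul c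
  exact h2.congr_deriv (by ring)

lemma Vf_hasDeriv (θ ρ : ℝ) {x : ℝ} (h1 : 0 < x + ρ) (h2 : 0 < ρ - x) :
    HasDerivAt (Vf θ ρ) (V1f θ ρ x) x := by
  have h := (hd_plus (KOc θ) (-KOa θ) ρ h1).add (hd_minus (KOc θ) (-KOa θ) ρ h2)
  refine h.congr_deriv ?_
  simp only [V1f]
  ring_nf

lemma V1f_hasDeriv (θ ρ : ℝ) {x : ℝ} (h1 : 0 < x + ρ) (h2 : 0 < ρ - x) :
    HasDerivAt (V1f θ ρ) (V2f θ ρ x) x := by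
  have h := (hd_plus (KOc θ * (-KOa θ)) (-KOa θ - 1) ρ h1).add
    (hd_minus (KOc θ * KOa θ) (-KOa θ - 1) ρ h2)
  refine h.congr_deriv ?_
  simp only [V2f]
  rw [show -KOa θ - 1 - 1 = -KOa θ - 2 by ring]
  ring

lemma superadd {a b p : ℝ} (ha : 0 ≤ a) (hb : 0 ≤ b) (hp : 1 ≤ p) :
    a ^ p + b ^ p ≤ (a + b) ^ p := by
  have h := NNReal.add_rpow_le_rpow_add a.toNNReal b.toNNReal hp
  have h2 := NNReal.coe_le_coe.2 h
  push_cast [NNReal.coe_rpow] at h2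
  rwa [Real.coe_toNNReal _ ha, Real.coe_toNNReal _ hb] at h2

lemma KOc_pos {θ : ℝ} (hθ : 1 < θ) : 0 < KOc θ :=
  Real.rpow_pos_of_pos (mul_pos (Real.sqrt_pos.2 two_pos) (by linarith)) _

lemma KOa_pos {θ : ℝ} (hθ : 1 < θ) : 0 < KOa θ := by
  have : (0:ℝ) < θ - 1 := by linarith
  simp only [KOa]; positivity

lemma Vf_pos {θ ρ x : ℝ} (hθ : 1 < θ) (h1 : 0 < x + ρ) (h2 : 0 < ρ - x) :
    0 < Vf θ ρ x := by
  have hc := KOc_pos hθ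
  have := Real.rpow_pos_of_pos h1 (-KOa θ)
  have := Real.rpow_pos_of_pos h2 (-KOa θ)
  simp only [Vf]; positivity

lemma const_id (θ : ℝ) (hθ : 1 < θ) {s : ℝ} (hs : 0 < s) :
    2 * θ * (KOc θ * s ^ (-KOa θ)) ^ (2 * θ - 1)
      = KOc θ * (KOa θ * (KOa θ + 1)) * s ^ (-KOa θ - 2) := by
  simp only [KOc, KOa]
  have hθ1 : (0:ℝ) < θ - 1 := by linarith
  set α : ℝ := 1 / (θ - 1) with hα
  have hαθ : α * (θ - 1) = 1 := by rw [hα]; field_simp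
  have hαpos : 0 < α := by positivity
  set K : ℝ := Real.sqrt 2 * (θ - 1) with hK
  have hKpos : 0 < K := mul_pos (Real.sqrt_pos.2 two_pos) hθ1
  set β : ℝ := 2 * θ - 1 with hβ
  have hc : (0:ℝ) < K ^ (-α) := Real.rpow_pos_of_pos hKpos _
  have h1 : (K ^ (-α) * s ^ (-α)) ^ β = (K ^ (-α)) ^ β * (s ^ (-α)) ^ β :=
    Real.mul_rpow hc.le (Real.rpow_nonneg hs.le _)
  have h2 : (s ^ (-α)) ^ β = s ^ (-α - 2) := by
    rw [← Real.rpow_mul hs.le]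
    congr 1
    rw [hβ]
    linear_combination (-2 : ℝ) * hαθ
  have h3 : (K ^ (-α)) ^ β = K ^ (-α) * (α ^ 2 / 2) := by
    rw [← Real.rpow_mul hKpos.le]
    have hexp : -α * β = -α + -2 := by rw [hβ]; linear_combination (-2 : ℝ) * hαθ
    rw [hexp, Real.rpow_add hKpos]
    congr 1
    have h4 : K ^ (-2 : ℝ) = (K ^ 2)⁻¹ := by
      rw [show (-2:ℝ) = -(2:ℕ) by norm_num, Real.rpow_neg hKpos.le, Real.rpow_natCast]
    have hK2 : K ^ 2 = 2 * (θ - 1) ^ 2 := by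
      rw [hK, mul_pow, Real.sq_sqrt (by norm_num : (0:ℝ) ≤ 2)]
    rw [h4, hK2]
    have hα2 : α ^ 2 * (θ - 1) ^ 2 = 1 := by nlinarith [hαθ]
    field_simp
    nlinarith [hα2]
  have hθα : α * (α + 1) = θ * α ^ 2 := by nlinarith [hαθ]
  rw [h1, h2, h3]
  linear_combination (-(K ^ (-α) * s ^ (-α - 2))) * hθα

lemma Vf_super (θ ρ : ℝ) (hθ : 1 < θ) {x : ℝ} (h1 : 0 < x + ρ) (h2 : 0 < ρ - x) :
    V2f θ ρ x ≤ 2 * θ * Vf θ ρ x ^ (2 * θ - 1) := by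
  have hc := KOc_pos hθ
  have ha : 0 ≤ KOc θ * (x + ρ) ^ (-KOa θ) :=
    mul_nonneg hc.le (Real.rpow_nonneg h1.le _)
  have hb : 0 ≤ KOc θ * (ρ - x) ^ (-KOa θ) :=
    mul_nonneg hc.le (Real.rpow_nonneg h2.le _)
  have hβ : (1:ℝ) ≤ 2 * θ - 1 := by linarith
  have hsum := superadd ha hb hβ
  have hmul := mul_le_mul_of_nonneg_left hsum (by linarith : (0:ℝ) ≤ 2 * θ)
  calc V2f θ ρ x
      = 2 * θ * ((KOc θ * (x + ρ) ^ (-KOa θ)) ^ (2 * θ - 1)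
          + (KOc θ * (ρ - x) ^ (-KOa θ)) ^ (2 * θ - 1)) := by
        simp only [V2f]
        rw [mul_add (2 * θ), const_id θ hθ h1, const_id θ hθ h2]
    _ ≤ 2 * θ * (KOc θ * (x + ρ) ^ (-KOa θ) + KOc θ * (ρ - x) ^ (-KOa θ)) ^ (2 * θ - 1) := hmul
    _ = 2 * θ * Vf θ ρ x ^ (2 * θ - 1) := rfl

lemma secondDeriv_nonpos_of_isLocalMax {w : ℝ → ℝ} {a c : ℝ}
    (h : IsLocalMax w a) (hw : ∀ᶠ x in nhds a, DifferentiableAt ℝ w x)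
    (hw2 : HasDerivAt (deriv w) c a) : c ≤ 0 := by
  by_contra hc
  push_neg at hc
  have hga : deriv w a = 0 := h.deriv_eq_zero
  have hslope : Tendsto (slope (deriv w) a) (nhdsWithin a {a}ᶜ) (nhds c) :=
    hasDerivAt_iff_tendsto_slope.1 hw2
  have hpos : ∀ᶠ x in nhdsWithin a {a}ᶜ, 0 < slope (deriv w) a x :=
    hslope.eventually (eventually_gt_nhds hc)
  rw [eventually_nhdsWithin_iff] at hpos
  have hcomb := hpos.and (hw.and h)
  rw [Metric.eventually_nhds_iff] at hcomb
  obtain ⟨ε, hε, hball⟩ := hcomb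
  set b := a + ε / 2 with hb
  have hab : a < b := by simp only [hb, lt_add_iff_pos_right]; positivity
  have hmem : ∀ x ∈ Icc a b, dist x a < ε := by
    intro x hx
    rw [Real.dist_eq, abs_lt]
    have := hx.1; have := hx.2
    constructor <;> simp only [hb] at * <;> linarith
  have hcont : ContinuousOn w (Icc a b) := fun x hx =>
    ((hball (hmem x hx)).2.1).continuousAt.continuousWithinAt
  have hderiv : ∀ x ∈ interior (Icc a b), 0 < deriv w x := by
    intro x hx
    rw [interior_Icc] at hx
    have hxa : x ≠ a := ne_of_gt hx.1
    have hsl := (hball (hmem x ⟨hx.1.le, hx.2.le⟩)).1 hxa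
    rw [slope_def_field, hga, sub_zero] at hsl
    have hxa' : 0 < x - a := sub_pos.2 hx.1
    rcases div_pos_iff.mp hsl with ⟨h1, _⟩ | ⟨_, h2⟩
    · exact h1
    · linarith
  have hsm : StrictMonoOn w (Icc a b) :=
    strictMonoOn_of_deriv_pos (convex_Icc a b) hcont hderiv
  have h1 : w a < w b := hsm (left_mem_Icc.2 hab.le) (right_mem_Icc.2 hab.le) hab
  have h2 : w b ≤ w a := (hball (hmem b (right_mem_Icc.2 hab.le))).2.2
  linarith

lemma comparison (θ r : ℝ) (hθ : 1 < θ) (u : ℝ → ℝ)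
    (hu1 : ∀ x ∈ Ioo (-r) r, DifferentiableAt ℝ u x)
    (hu2 : ∀ x ∈ Ioo (-r) r, DifferentiableAt ℝ (deriv u) x)
    (hsub : ∀ x ∈ Ioo (-r) r,
      -(deriv (deriv u) x) + 2 * θ * u x ^ (2 * θ - 1) ≤ 0)
    (ρ : ℝ) (hρ0 : 0 < ρ) (hρr : ρ < r) :
    ∀ x ∈ Ioo (-ρ) ρ, u x ≤ Vf θ ρ x := by
  intro x0 hx0
  by_contra hlt
  push_neg at hlt
  have hc := KOc_pos hθ
  have hα := KOa_pos hθ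
  have hIccIoo : Icc (-ρ) ρ ⊆ Ioo (-r) r := fun y hy =>
    ⟨by linarith [hy.1], by linarith [hy.2]⟩
  have hIooIoo : Ioo (-ρ) ρ ⊆ Ioo (-r) r := fun y hy =>
    ⟨by linarith [hy.1], by linarith [hy.2]⟩
  -- upper bound M for u on Icc
  obtain ⟨z, hz, hzmax⟩ := isCompact_Icc.exists_isMaxOn
    (nonempty_Icc.2 (by linarith : -ρ ≤ ρ))
    (fun y hy => (hu1 y (hIccIoo hy)).continuousAt.continuousWithinAt)
  set M := u z with hM
  have hMub : ∀ y ∈ Icc (-ρ) ρ, u y ≤ M := fun y hy => hzmax hy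
  set G := M - u x0 + Vf θ ρ x0 with hG
  -- choose δ
  set B := max (G / KOc θ) 0 + 1 with hB
  have hBpos : 0 < B := by
    have := le_max_right (G / KOc θ) 0
    simp only [hB]; linarith
  have hGB : G < KOc θ * B := by
    have h1 : G / KOc θ ≤ max (G / KOc θ) 0 := le_max_left _ _
    have h2 : G ≤ KOc θ * max (G / KOc θ) 0 := by
      rw [← div_le_iff₀' hc] at *
      linarith
    simp only [hB]
    nlinarith
  set δ1 := B ^ (-(1 / KOa θ)) with hδ1def
  have hδ1pos : 0 < δ1 := Real.rpow_pos_of_pos hBpos _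
  have hδ1B : δ1 ^ (-KOa θ) = B := by
    rw [hδ1def, ← Real.rpow_mul hBpos.le]
    rw [show -(1 / KOa θ) * (-KOa θ) = 1 by field_simp]
    exact Real.rpow_one B
  set δ := min (min ((ρ - x0) / 2) ((x0 + ρ) / 2)) δ1 with hδdef
  have hδa : δ ≤ (ρ - x0) / 2 := le_trans (min_le_left _ _) (min_le_left _ _)
  have hδb : δ ≤ (x0 + ρ) / 2 := le_trans (min_le_left _ _) (min_le_right _ _)
  have hδ1le : δ ≤ δ1 := min_le_right _ _
  have hδpos : 0 < δ := by
    refine lt_min (lt_min ?_ ?_) hδ1pos <;> linarith [hx0.1, hx0.2]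
  -- tail estimate
  have hVbig : ∀ s : ℝ, 0 < s → s ≤ δ → G < KOc θ * s ^ (-KOa θ) := by
    intro s hs hsδ
    have h1 : δ1 ^ (-KOa θ) ≤ δ ^ (-KOa θ) :=
      Real.rpow_le_rpow_of_nonpos hδpos hδ1le (by linarith)
    have h2 : δ ^ (-KOa θ) ≤ s ^ (-KOa θ) :=
      Real.rpow_le_rpow_of_nonpos hs hsδ (by linarith)
    rw [hδ1B] at h1
    nlinarith
  set w := fun y => u y - Vf θ ρ y with hw
  set K := Icc (-(ρ - δ)) (ρ - δ) with hKdef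
  have hKsub : K ⊆ Ioo (-ρ) ρ := fun y hy =>
    ⟨by linarith [hy.1], by linarith [hy.2]⟩
  have hx0K : x0 ∈ K := ⟨by linarith [hx0.1], by linarith [hx0.2]⟩
  have hwcont : ContinuousOn w K := by
    intro y hy
    have hy' := hKsub hy
    exact ((hu1 y (hIooIoo hy')).sub
      (Vf_hasDeriv θ ρ (by linarith [hy'.1]) (by linarith [hy'.2])).differentiableAt
      ).continuousAt.continuousWithinAt
  obtain ⟨a, haK, hamax⟩ := isCompact_Icc.exists_isMaxOn ⟨x0, hx0K⟩ hwcont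
  have haIoo : a ∈ Ioo (-ρ) ρ := hKsub haK
  have hwx0 : 0 < w x0 := by simp only [hw]; linarith
  have hwa : w x0 ≤ w a := hamax hx0K
  -- tail: points outside K have small w
  have htail : ∀ y ∈ Ioo (-ρ) ρ, y ∉ K → w y < w x0 := by
    intro y hy hyK
    have hGy : G < Vf θ ρ y := by
      simp only [hKdef, mem_Icc, not_and_or, not_le] at hyK
      have hyp : 0 < y + ρ := by linarith [hy.1]
      have hym : 0 < ρ - y := by linarith [hy.2]
      rcases hyK with h | h
      · have := hVbig (y + ρ) hyp (by linarith)
        have := mul_nonneg hc.le (Real.rpow_nonneg hym.le (-KOa θ))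
        simp only [Vf]; linarith
      · have := hVbig (ρ - y) hym (by linarith)
        have := mul_nonneg hc.le (Real.rpow_nonneg hyp.le (-KOa θ))
        simp only [Vf]; linarith
    have hyM : u y ≤ M := hMub y ⟨hy.1.le, hy.2.le⟩
    simp only [hw, hG] at *
    linarith
  have hloc : IsLocalMax w a := by
    filter_upwards [Ioo_mem_nhds haIoo.1 haIoo.2] with y hy
    by_cases hyK : y ∈ K
    · exact hamax hyK
    · exact le_trans (htail y hy hyK).le hwa
  -- derivatives at a
  have hap : 0 < a + ρ := by linarith [haIoo.1]
  have ham : 0 < ρ - a := by linarith [haIoo.2]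
  have hwdiff : ∀ y ∈ Ioo (-ρ) ρ, HasDerivAt w (deriv u y - V1f θ ρ y) y := by
    intro y hy
    exact ((hu1 y (hIooIoo hy)).hasDerivAt).sub
      (Vf_hasDeriv θ ρ (by linarith [hy.1]) (by linarith [hy.2]))
  have hwev : ∀ᶠ y in nhds a, DifferentiableAt ℝ w y := by
    filter_upwards [Ioo_mem_nhds haIoo.1 haIoo.2] with y hy
    exact (hwdiff y hy).differentiableAt
  have hwderiv_eq : deriv w =ᶠ[nhds a] fun y => deriv u y - V1f θ ρ y := by
    filter_upwards [Ioo_mem_nhds haIoo.1 haIoo.2] with y hy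
    exact (hwdiff y hy).deriv
  have h2 : HasDerivAt (deriv w) (deriv (deriv u) a - V2f θ ρ a) a := by
    refine HasDerivAt.congr_of_eventuallyEq ?_ hwderiv_eq
    exact ((hu2 a (hIooIoo haIoo)).hasDerivAt).sub (V1f_hasDeriv θ ρ hap ham)
  have hsec := secondDeriv_nonpos_of_isLocalMax hloc hwev h2
  -- contradiction chain
  have hVa : 0 < Vf θ ρ a := Vf_pos hθ hap ham
  have hua : Vf θ ρ a < u a := by
    have : 0 < w a := lt_of_lt_of_le hwx0 hwa
    simp only [hw] at this; linarith
  have hsub_a := hsub a (hIooIoo haIoo)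
  have hsuper := Vf_super θ ρ hθ hap ham
  have hpow : Vf θ ρ a ^ (2 * θ - 1) < u a ^ (2 * θ - 1) :=
    Real.rpow_lt_rpow hVa.le hua (by linarith)
  nlinarith


/-- Keller–Osserman universal upper bound (Lemma A.2(i)): any C² subsolution of
`-u'' + 2θ u^(2θ-1) ≤ 0` on `(-r, r)` satisfies
`u(x) ≤ (√2 (θ-1))^{-1/(θ-1)} [(x+r)^{-1/(θ-1)} + (r-x)^{-1/(θ-1)}]`. -/
theorem stmt10 (θ r : ℝ) (hθ : 1 < θ) (hr : 0 < r) (u : ℝ → ℝ)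
    (hu1 : ∀ x ∈ Ioo (-r) r, DifferentiableAt ℝ u x)
    (hu2 : ∀ x ∈ Ioo (-r) r, DifferentiableAt ℝ (deriv u) x)
    (hsub : ∀ x ∈ Ioo (-r) r,
      -(deriv (deriv u) x) + 2 * θ * u x ^ (2 * θ - 1) ≤ 0) :
    ∀ x ∈ Ioo (-r) r,
      u x ≤ (Real.sqrt 2 * (θ - 1)) ^ (-(1 / (θ - 1))) *
        ((x + r) ^ (-(1 / (θ - 1))) + (r - x) ^ (-(1 / (θ - 1)))) := by
  intro x hx
  have habs : |x| < r := abs_lt.2 ⟨by linarith [hx.1], hx.2⟩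
  have hev : ∀ᶠ ρ in nhdsWithin r (Iio r), u x ≤ Vf θ ρ x := by
    filter_upwards [Ioo_mem_nhdsLT_of_mem ⟨habs, le_refl r⟩] with ρ hρ
    have hρ0 : 0 < ρ := lt_of_le_of_lt (abs_nonneg x) hρ.1
    have hxρ := abs_lt.1 hρ.1
    exact comparison θ r hθ u hu1 hu2 hsub ρ hρ0 hρ.2 x ⟨hxρ.1, hxρ.2⟩
  have htend : Tendsto (fun ρ => Vf θ ρ x) (nhdsWithin r (Iio r)) (nhds (Vf θ r x)) := by
    apply Tendsto.mono_left _ nhdsWithin_le_nhds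
    have hxr : x + r ≠ 0 := by have := abs_lt.1 habs; intro h; linarith [this.1]
    have hrx : r - x ≠ 0 := by have := abs_lt.1 habs; intro h; linarith [this.2]
    have c1 : ContinuousAt (fun ρ : ℝ => x + ρ) r := by fun_prop
    have c2 : ContinuousAt (fun ρ : ℝ => ρ - x) r := by fun_prop
    have h := ((c1.rpow_const (p := -KOa θ) (Or.inl hxr)).const_mul (KOc θ)).add
      ((c2.rpow_const (p := -KOa θ) (Or.inl hrx)).const_mul (KOc θ))
    simpa [Vf, ContinuousAt, Pi.add_def] using h
  have hfin : u x ≤ Vf θ r x := ge_of_tendsto htend hev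
  calc u x ≤ Vf θ r x := hfin
    _ = (Real.sqrt 2 * (θ - 1)) ^ (-(1 / (θ - 1))) *
        ((x + r) ^ (-(1 / (θ - 1))) + (r - x) ^ (-(1 / (θ - 1)))) := by
      simp only [Vf, KOc, KOa]; ring
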